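/- For every r > 0 and positive integer x, the sum over y with h(x) ≤ y ≤ x of C(y, x−y)·(4r)^y equals (γ(r)·γ₂(r)/(γ(r)+γ₂(r)))·(γ(r)^(−(x+1)) − (−γ₂(r))^(−(x+1))), where γ₂(r) = γ(r)+1 and h(x) is the smallest integer with 2h(x) ≥ x. -/

import Mathlib

noncomputable def gam (r : ℝ) : ℝ := (Real.sqrt ((1 + r) / r) - 1) / 2

noncomputable def gam2 (r : ℝ) : ℝ := gam r + 1

/-- `h x` is the smallest integer `y` with `2 * y ≥ x` (the upper half of `x`). -/
def upperHalf (x : ℕ) : ℕ := (x + 1) / 2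

lemma sum_rec (t : ℝ) (x : ℕ) :
    ∑ y ∈ Finset.range (x + 3), (Nat.choose y (x + 2 - y) : ℝ) * t ^ y
      = t * (∑ y ∈ Finset.range (x + 2), (Nat.choose y (x + 1 - y) : ℝ) * t ^ y)
        + t * (∑ y ∈ Finset.range (x + 1), (Nat.choose y (x - y) : ℝ) * t ^ y) := by
  rw [Finset.sum_range_succ' (fun y => (Nat.choose y (x + 2 - y) : ℝ) * t ^ y) (x + 2)]
  have h0 : (Nat.choose 0 (x + 2 - 0) : ℝ) * t ^ 0 = 0 := by
    simp [Nat.choose]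
  rw [h0, add_zero]
  have hsplit : ∀ i ∈ Finset.range (x + 2),
      (Nat.choose (i + 1) (x + 2 - (i + 1)) : ℝ) * t ^ (i + 1)
        = (Nat.choose i (x + 1 - i) : ℝ) * t ^ (i + 1)
          + (if i ≤ x then (Nat.choose i (x - i) : ℝ) * t ^ (i + 1) else 0) := by
    intro i hi
    rw [Finset.mem_range] at hi
    rcases Nat.lt_or_ge i (x + 1) with h | h
    · have hle : i ≤ x := Nat.lt_succ_iff.mp h
      rw [if_pos hle]
      have h1 : x + 2 - (i + 1) = (x - i) + 1 := by omega
      have h2 : x + 1 - i = (x - i) + 1 := by omega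
      rw [h1, h2, Nat.choose_succ_succ]
      push_cast
      ring
    · have hi' : i = x + 1 := by omega
      subst hi'
      rw [if_neg (by omega)]
      norm_num
  rw [Finset.sum_congr rfl hsplit, Finset.sum_add_distrib]
  have h2 : ∑ i ∈ Finset.range (x + 2),
      (if i ≤ x then (Nat.choose i (x - i) : ℝ) * t ^ (i + 1) else 0)
      = ∑ i ∈ Finset.range (x + 1), (Nat.choose i (x - i) : ℝ) * t ^ (i + 1) := by
    rw [Finset.sum_range_succ, if_neg (by omega), add_zero]
    apply Finset.sum_congr rfl
    intro i hi
    rw [Finset.mem_range] at hi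
    rw [if_pos (by omega)]
  rw [h2, Finset.mul_sum, Finset.mul_sum]
  congr 1 <;> apply Finset.sum_congr rfl <;> intro i _ <;> ring

lemma binet (t a b : ℝ) (ha : a ^ 2 = t * (a + 1)) (hb : b ^ 2 = t * (b + 1))
    (hne : a ≠ b) :
    ∀ x : ℕ, ∑ y ∈ Finset.range (x + 1), (Nat.choose y (x - y) : ℝ) * t ^ y
      = (a ^ (x + 1) - b ^ (x + 1)) / (a - b)
  | 0 => by
    have hd : a - b ≠ 0 := sub_ne_zero.mpr hne
    simp [div_self hd]
  | 1 => by
    have : ∑ y ∈ Finset.range 2, (Nat.choose y (1 - y) : ℝ) * t ^ y = t := by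
      simp [Finset.sum_range_succ]
    rw [this]
    have hd : a - b ≠ 0 := sub_ne_zero.mpr hne
    field_simp
    linear_combination hb - ha
  | (x + 2) => by
    have ih1 := binet t a b ha hb hne (x + 1)
    have ih0 := binet t a b ha hb hne x
    have hd : a - b ≠ 0 := sub_ne_zero.mpr hne
    rw [show x + 2 + 1 = x + 3 from rfl, sum_rec, ih1, ih0]
    field_simp
    linear_combination (b * b ^ x) * hb - (a * a ^ x) * ha


theorem g_closed_form (r : ℝ) (hr : 0 < r) (x : ℕ) (hx : 1 ≤ x) :
    ∑ y ∈ Finset.Icc (upperHalf x) x, (Nat.choose y (x - y) : ℝ) * (4 * r) ^ y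
      = (gam r * gam2 r / (gam r + gam2 r)) *
        (gam r ^ (-(x + 1 : ℤ)) - (-gam2 r) ^ (-(x + 1 : ℤ))) := by
  have hfrac : (1:ℝ) < (1 + r) / r := by rw [lt_div_iff₀ hr]; linarith
  have hs1 : 1 < Real.sqrt ((1 + r) / r) := by
    have := Real.sqrt_lt_sqrt (by norm_num : (0:ℝ) ≤ 1) hfrac
    rwa [Real.sqrt_one] at this
  have hs2 : r * Real.sqrt ((1 + r) / r) ^ 2 = 1 + r := by
    rw [Real.sq_sqrt (by positivity : (0:ℝ) ≤ (1 + r) / r)]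
    field_simp
  have hgam : gam r = (Real.sqrt ((1 + r) / r) - 1) / 2 := rfl
  have hg2eq : gam2 r = gam r + 1 := rfl
  have hg : 0 < gam r := by rw [hgam]; linarith
  have hg2 : 0 < gam2 r := by rw [hg2eq]; linarith
  have hgne : gam r ≠ 0 := ne_of_gt hg
  have hg2ne : gam2 r ≠ 0 := ne_of_gt hg2
  have hkey : 4 * r * (gam r * (gam r + 1)) = 1 := by
    rw [hgam]
    set s := Real.sqrt ((1 + r) / r) with hsdef
    field_simp
    linear_combination 4 * hs2
  have hkey2 : 4 * r * ((gam2 r - 1) * gam2 r) = 1 := by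
    rw [hg2eq]; linear_combination hkey
  set a : ℝ := (gam r)⁻¹ with hadef
  set b : ℝ := -(gam2 r)⁻¹ with hbdef
  have ha : a ^ 2 = (4 * r) * (a + 1) := by
    rw [hadef]
    field_simp
    linear_combination (-1) * hkey
  have hb : b ^ 2 = (4 * r) * (b + 1) := by
    rw [hbdef]
    field_simp
    linear_combination (-1) * hkey2
  have hne : a ≠ b := by
    have h1 : 0 < a := by rw [hadef]; positivity
    have h2 : b < 0 := by rw [hbdef]; simp; positivity
    linarith
  have hrange : ∑ y ∈ Finset.Icc (upperHalf x) x, (Nat.choose y (x - y) : ℝ) * (4 * r) ^ y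
      = ∑ y ∈ Finset.range (x + 1), (Nat.choose y (x - y) : ℝ) * (4 * r) ^ y := by
    apply Finset.sum_subset
    · intro y hy
      rw [Finset.mem_Icc] at hy
      rw [Finset.mem_range]
      omega
    · intro y hy hny
      rw [Finset.mem_range] at hy
      rw [Finset.mem_Icc] at hny
      have : y < x - y := by unfold upperHalf at hny; omega
      rw [Nat.choose_eq_zero_of_lt this]
      simp
  rw [hrange, binet (4 * r) a b ha hb hne x]
  have hcast : (-(x + 1 : ℤ)) = -((x + 1 : ℕ) : ℤ) := by push_cast; ring
  rw [hcast, zpow_neg, zpow_neg, zpow_natCast, zpow_natCast, ← inv_pow, ← inv_pow, inv_neg]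
  have hd : a - b ≠ 0 := sub_ne_zero.mpr hne
  have hsum : gam r + gam2 r ≠ 0 := by positivity
  rw [hadef, hbdef]
  field_simp
  rw [show gam2 r - -gam r = gam r + gam2 r by ring, mul_div_cancel_right₀ _ hsum]
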